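/- Let Γ be a countable group and μ a probability measure on Γ whose support generates Γ, with finite entropy H(μ), such that the associated random walk is transient. If the asymptotic entropy h is strictly positive, then the logarithmic volume growth in the Green metric satisfies v_G = limsup_{n→∞} ln(V_G(n))/n ≥ 1. -/

import Mathlib

open MeasureTheory ProbabilityTheory Filter
open scoped ENNReal

noncomputable section

variable {Γ Ω : Type*}

/-- Position at time `n` of the random walk started at `x` with i.i.d. increments
`X 0, X 1, …` : `Z_n = x * X_0 * X_1 * ⋯ * X_{n-1}` (ordered product). -/
def walk [Group Γ] (x : Γ) (X : ℕ → Ω → Γ) (n : ℕ) (ω : Ω) : Γ :=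
  x * ((List.range n).map fun k => X k ω).prod

/-- Hitting probability `F(x,y) = ℙ^x[∃ n ≥ 0, Z_n = y]`. -/
def hitProb [Group Γ] [MeasurableSpace Ω] (P : Measure Ω) (X : ℕ → Ω → Γ) (x y : Γ) : ℝ≥0∞ :=
  P {ω | ∃ n : ℕ, walk x X n ω = y}

/-- Green metric `d_G(x,y) = -ln F(x,y)`. -/
def greenDist [Group Γ] [MeasurableSpace Ω] (P : Measure Ω) (X : ℕ → Ω → Γ) (x y : Γ) : ℝ :=
  - Real.log (hitProb P X x y).toReal

/-- Green function `G(x,y) = Σ_{n≥0} ℙ^x[Z_n = y]`. -/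
def greenFn [Group Γ] [MeasurableSpace Ω] (P : Measure Ω) (X : ℕ → Ω → Γ) (x y : Γ) : ℝ≥0∞ :=
  ∑' n : ℕ, P {ω | walk x X n ω = y}

/-- Martin kernel `K(x,y) = G(x,y)/G(e,y)` (real-valued; `G` is finite by transience). -/
def martinK [Group Γ] [MeasurableSpace Ω] (P : Measure Ω) (X : ℕ → Ω → Γ) (x y : Γ) : ℝ :=
  (greenFn P X x y).toReal / (greenFn P X 1 y).toReal

/-- Word ball of radius `n` for the generating set `S` : elements expressible as a
product of at most `n` generators. -/
def wordBall [Group Γ] (S : Finset Γ) (n : ℕ) : Set Γ :=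
  {x | ∃ l : List Γ, l.length ≤ n ∧ (∀ g ∈ l, g ∈ (S : Set Γ)) ∧ l.prod = x}


lemma measurable_walk_aux {Γ Ω : Type*} [Group Γ] [Countable Γ] [MeasurableSpace Γ]
    [MeasurableSingletonClass Γ] [MeasurableSpace Ω]
    (X : ℕ → Ω → Γ) (hmeas : ∀ k, Measurable (X k)) (x : Γ) (n : ℕ) :
    Measurable (walk x X n) := by
  induction n with
  | zero =>
    have h0 : walk x X 0 = fun _ => x := by funext ω; simp [walk]
    rw [h0]; exact measurable_const
  | succ k ih =>
    have hstep : walk x X (k+1) = fun ω => walk x X k ω * X k ω := by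
      funext ω; simp [walk, List.range_succ, mul_assoc]
    rw [hstep]
    exact (measurable_of_countable (fun p : Γ × Γ => p.1 * p.2)).comp (ih.prodMk (hmeas k))

set_option maxHeartbeats 1000000 in
/-- if the asymptotic entropy `h` is strictly positive, then the
logarithmic volume growth of Green balls satisfies `v_G ≥ 1`, i.e. for every
`ε > 0`, frequently `V_G(n) ≥ exp((1-ε)n)`. -/
theorem green_volume_growth_ge_one_of_entropy_pos
    [Group Γ] [Countable Γ] [MeasurableSpace Γ] [MeasurableSingletonClass Γ]
    [MeasurableSpace Ω] (P : Measure Ω) [IsProbabilityMeasure P]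
    (μ : Measure Γ) [IsProbabilityMeasure μ]
    (X : ℕ → Ω → Γ) (hmeas : ∀ k, Measurable (X k))
    (hiid : iIndepFun X P)
    (hlaw : ∀ k, Measure.map (X k) P = μ)
    (hgen : Subgroup.closure {g : Γ | μ {g} ≠ 0} = ⊤)
    (htrans : P {ω | ∃ n ≥ 1, walk 1 X n ω = 1} < 1)
    (hent : Summable fun g : Γ => Real.negMulLog (μ {g}).toReal)
    (h : ℝ) (hpos : 0 < h)
    (hh : ∀ᵐ ω ∂P, Tendsto (fun n : ℕ =>
        (- Real.log ((Measure.map (walk 1 X n) P) {walk 1 X n ω}).toReal) / n)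
      atTop (nhds h)) :
    ∀ ε : ℝ, 0 < ε → ∃ᶠ n : ℕ in atTop,
      ENNReal.ofReal (Real.exp ((1 - ε) * n))
        ≤ {x : Γ | greenDist P X 1 x ≤ (n : ℝ)}.encard := by
  intro ε hε
  classical
  set ε' : ℝ := min ε 1 with hε'def
  have hε'pos : 0 < ε' := lt_min hε one_pos
  have hε'le1 : ε' ≤ 1 := min_le_right _ _
  have hε'leε : ε' ≤ ε := min_le_left _ _
  set δ : ℝ := ε' * h / 4 with hδdef
  have hδpos : 0 < δ := by positivity
  have hδlth : δ < h := by nlinarith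
  set γ : ℝ := ε' * h / 2 with hγdef
  have hγpos : 0 < γ := by positivity
  have hkey : (1 - ε') * (h + δ) ≤ (h - δ) - γ := by nlinarith
  have hZ : ∀ k : ℕ, Measurable (walk (1:Γ) X k) :=
    fun k => measurable_walk_aux X hmeas 1 k
  set g : ℕ → Γ → ℝ :=
    fun k x => (- Real.log ((Measure.map (walk 1 X k) P) {x}).toReal) / k with hgdef
  set f : ℕ → Ω → ℝ := fun k ω => g k (walk 1 X k ω) with hfdef
  have hfmeas : ∀ k, Measurable (f k) :=
    fun k => (measurable_of_countable (g k)).comp (hZ k)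
  have hTIM : TendstoInMeasure P f atTop (fun _ => h) :=
    tendstoInMeasure_of_tendsto_ae (fun k => (hfmeas k).aestronglyMeasurable) hh
  have hev : ∀ᶠ k : ℕ in atTop, P {ω | δ ≤ dist (f k ω) h} < 1/2 :=
    (tendstoInMeasure_iff_dist.mp hTIM δ hδpos).eventually_lt_const (by norm_num)
  rw [eventually_atTop] at hev
  obtain ⟨M, hM⟩ := hev
  rw [frequently_atTop]
  intro N
  set m : ℕ := max (max M 1) (max ⌈(N:ℝ)/(h+δ)⌉₊ ⌈(1 + Real.log 2)/γ⌉₊) with hmdef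
  have hmM : M ≤ m := le_trans (le_max_left _ _) (le_max_left _ _)
  have hm1 : 1 ≤ m := le_trans (le_max_right _ _) (le_max_left _ _)
  have hmpos : (0:ℝ) < m := by exact_mod_cast hm1
  have hhδpos : (0:ℝ) < h + δ := by linarith
  have hmN : (N:ℝ) ≤ (h+δ) * m := by
    have h1 : (⌈(N:ℝ)/(h+δ)⌉₊ : ℝ) ≤ (m:ℝ) := by
      exact_mod_cast le_trans (le_max_left _ _) (le_max_right (max M 1) _)
    have h2 : (N:ℝ)/(h+δ) ≤ (m:ℝ) := le_trans (Nat.le_ceil _) h1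
    rw [div_le_iff₀ hhδpos] at h2
    linarith
  have hmγ : 1 + Real.log 2 ≤ γ * m := by
    have h1 : (⌈(1 + Real.log 2)/γ⌉₊ : ℝ) ≤ (m:ℝ) := by
      exact_mod_cast le_trans (le_max_right _ _) (le_max_right (max M 1) _)
    have h2 : (1 + Real.log 2)/γ ≤ (m:ℝ) := le_trans (Nat.le_ceil _) h1
    rw [div_le_iff₀ hγpos] at h2
    linarith
  set n : ℕ := ⌈(h+δ) * m⌉₊ with hndef
  have hnlow : (h+δ) * m ≤ (n:ℝ) := Nat.le_ceil _
  have hnup : (n:ℝ) ≤ (h+δ) * m + 1 := le_of_lt (Nat.ceil_lt_add_one (by positivity))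
  have hNn : N ≤ n := by exact_mod_cast le_trans hmN hnlow
  refine ⟨n, hNn, ?_⟩
  set ν := Measure.map (walk (1:Γ) X m) P with hνdef
  haveI : IsProbabilityMeasure ν := Measure.isProbabilityMeasure_map (hZ m).aemeasurable
  set A : Set Γ := {x | dist (g m x) h < δ} with hAdef
  -- probability of the good event is at least 1/2
  have hEc : P {ω | δ ≤ dist (f m ω) h} < 1/2 := hM m hmM
  have hhalf : (1:ℝ≥0∞)/2 ≤ P {ω | dist (f m ω) h < δ} := by
    by_contra hc
    push_neg at hc
    have hcover : (Set.univ : Set Ω) ⊆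
        {ω | dist (f m ω) h < δ} ∪ {ω | δ ≤ dist (f m ω) h} := by
      intro ω _
      rcases lt_or_ge (dist (f m ω) h) δ with hd | hd
      · exact Or.inl hd
      · exact Or.inr hd
    have h1 : (1:ℝ≥0∞) ≤ P {ω | dist (f m ω) h < δ} + P {ω | δ ≤ dist (f m ω) h} := by
      calc (1:ℝ≥0∞) = P Set.univ := measure_univ.symm
        _ ≤ P ({ω | dist (f m ω) h < δ} ∪ {ω | δ ≤ dist (f m ω) h}) := measure_mono hcover
        _ ≤ _ := measure_union_le _ _
    have h2 : (1:ℝ≥0∞) < 1/2 + 1/2 := lt_of_le_of_lt h1 (ENNReal.add_lt_add hc hEc)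
    rw [ENNReal.add_halves] at h2
    exact lt_irrefl _ h2
  have hAmeas : MeasurableSet A := (Set.to_countable A).measurableSet
  have hνA : (1:ℝ≥0∞)/2 ≤ ν A := by
    rw [hνdef, Measure.map_apply (hZ m) hAmeas]
    exact hhalf
  -- pointwise bounds on ν {x} for x ∈ A
  have hpoint : ∀ x ∈ A, Real.exp (-((h+δ) * m)) ≤ (ν {x}).toReal ∧
      (ν {x}).toReal ≤ Real.exp (-((h-δ) * m)) := by
    intro x hx
    have hd : dist (g m x) h < δ := hx
    set t : ℝ := (ν {x}).toReal with htdef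
    have hgval : g m x = (- Real.log t) / m := rfl
    have habs : |(- Real.log t) / m - h| < δ := by
      rw [← Real.dist_eq, ← hgval]; exact hd
    have htpos : 0 < t := by
      rcases (ENNReal.toReal_nonneg : (0:ℝ) ≤ t).lt_or_eq with hp | hp
      · exact hp
      · exfalso
        have hzero : t = 0 := htdef.trans hp.symm
        rw [hzero] at habs
        have h0 : (-Real.log 0) / (m:ℝ) - h = -h := by simp
        rw [h0, abs_neg, abs_of_pos hpos] at habs
        linarith
    have habs' := abs_lt.mp habs
    have hup : - Real.log t < (h + δ) * m := by
      have h1 : (- Real.log t) / m < h + δ := by linarith [habs'.2]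
      calc - Real.log t = ((- Real.log t) / m) * m :=
            (div_mul_cancel₀ _ (ne_of_gt hmpos)).symm
        _ < (h + δ) * m := mul_lt_mul_of_pos_right h1 hmpos
    have hlo : (h - δ) * m < - Real.log t := by
      have h1 : h - δ < (- Real.log t) / m := by linarith [habs'.1]
      calc (h - δ) * m < ((- Real.log t) / m) * m := mul_lt_mul_of_pos_right h1 hmpos
        _ = - Real.log t := div_mul_cancel₀ _ (ne_of_gt hmpos)
    constructor
    · calc Real.exp (-((h+δ) * m)) ≤ Real.exp (Real.log t) :=
          Real.exp_le_exp.mpr (by linarith)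
        _ = t := Real.exp_log htpos
    · calc t = Real.exp (Real.log t) := (Real.exp_log htpos).symm
        _ ≤ Real.exp (-((h-δ) * m)) := Real.exp_le_exp.mpr (by linarith)
  -- lower bound on the cardinality of A
  have hencardA : ENNReal.ofReal (Real.exp ((h-δ)*m) / 2) ≤ (A.encard : ℝ≥0∞) := by
    by_cases hfin : A.Finite
    · have hb : ∀ x ∈ hfin.toFinset, ν {x} ≤ ENNReal.ofReal (Real.exp (-((h-δ)*m))) := by
        intro x hx
        have hx' : x ∈ A := hfin.mem_toFinset.mp hx
        exact (ENNReal.le_ofReal_iff_toReal_le (measure_ne_top ν _)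
          (Real.exp_nonneg _)).mpr (hpoint x hx').2
      have hAeq : (⋃ x ∈ hfin.toFinset, ({x} : Set Γ)) = A := by
        ext y; simp [hfin.mem_toFinset]
      have hsum : ν A ≤ (hfin.toFinset.card : ℝ≥0∞) * ENNReal.ofReal (Real.exp (-((h-δ)*m))) := by
        calc ν A = ν (⋃ x ∈ hfin.toFinset, ({x} : Set Γ)) := by rw [hAeq]
          _ ≤ ∑ x ∈ hfin.toFinset, ν {x} := measure_biUnion_finset_le _ _
          _ ≤ hfin.toFinset.card • ENNReal.ofReal (Real.exp (-((h-δ)*m))) :=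
              Finset.sum_le_card_nsmul _ _ _ hb
          _ = (hfin.toFinset.card : ℝ≥0∞) * ENNReal.ofReal (Real.exp (-((h-δ)*m))) := by
              rw [nsmul_eq_mul]
      have h2 : (1:ℝ≥0∞)/2 ≤ (hfin.toFinset.card : ℝ≥0∞) *
          ENNReal.ofReal (Real.exp (-((h-δ)*m))) := le_trans hνA hsum
      have hmul := mul_le_mul_left h2 (ENNReal.ofReal (Real.exp ((h-δ)*m)))
      rw [mul_assoc, ← ENNReal.ofReal_mul (Real.exp_nonneg _), ← Real.exp_add] at hmul
      have hx0 : -((h-δ)*m) + (h-δ)*m = 0 := by ring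
      rw [hx0, Real.exp_zero, ENNReal.ofReal_one, mul_one] at hmul
      have hlhs : ENNReal.ofReal (Real.exp ((h-δ)*m) / 2) =
          (1:ℝ≥0∞)/2 * ENNReal.ofReal (Real.exp ((h-δ)*m)) := by
        rw [ENNReal.ofReal_div_of_pos two_pos, ENNReal.ofReal_ofNat,
          ENNReal.div_eq_inv_mul, one_div]
      rw [hlhs]
      refine le_trans hmul ?_
      rw [Set.Finite.encard_eq_coe_toFinset_card hfin]
      simp
    · have : A.encard = ⊤ := Set.Infinite.encard_eq hfin
      rw [this]
      simp
  -- A is inside the Green ball of radius n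
  have hball : A ⊆ {x : Γ | greenDist P X 1 x ≤ (n : ℝ)} := by
    intro x hx
    obtain ⟨hlo, hhi⟩ := hpoint x hx
    have htpos : 0 < (ν {x}).toReal := lt_of_lt_of_le (Real.exp_pos _) hlo
    have hle : ν {x} ≤ hitProb P X 1 x := by
      rw [hνdef, Measure.map_apply (hZ m) (MeasurableSet.singleton x)]
      exact measure_mono fun ω hw => ⟨m, hw⟩
    have hFne : hitProb P X 1 x ≠ ⊤ := measure_ne_top P _
    have hFt : (ν {x}).toReal ≤ (hitProb P X 1 x).toReal := ENNReal.toReal_mono hFne hle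
    have hlog1 : Real.log (ν {x}).toReal ≤ Real.log (hitProb P X 1 x).toReal :=
      Real.log_le_log htpos hFt
    have hlog2 : -((h+δ)*m) ≤ Real.log (ν {x}).toReal := by
      calc -((h+δ)*m) = Real.log (Real.exp (-((h+δ)*m))) := (Real.log_exp _).symm
        _ ≤ Real.log (ν {x}).toReal := Real.log_le_log (Real.exp_pos _) hlo
    show greenDist P X 1 x ≤ (n:ℝ)
    unfold greenDist
    have h3 : -Real.log (hitProb P X 1 x).toReal ≤ (h+δ)*m := by linarith
    linarith
  -- conclude
  have hmono : (A.encard : ℝ≥0∞) ≤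
      (({x : Γ | greenDist P X 1 x ≤ (n : ℝ)}.encard : ℕ∞) : ℝ≥0∞) :=
    ENat.toENNReal_le.mpr (Set.encard_mono hball)
  refine le_trans ?_ (le_trans hencardA hmono)
  apply ENNReal.ofReal_le_ofReal
  have hdiv : Real.exp ((h-δ)*m) / 2 = Real.exp ((h-δ)*m - Real.log 2) := by
    rw [Real.exp_sub, Real.exp_log two_pos]
  rw [hdiv]
  apply Real.exp_le_exp.mpr
  have hn0 : (0:ℝ) ≤ (n:ℝ) := Nat.cast_nonneg n
  have hstep1 : (1-ε) * n ≤ (1-ε') * n := by nlinarith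
  have hstep2 : (1-ε') * n ≤ (1-ε') * ((h+δ)*m + 1) := by nlinarith
  have hstep3 : (1-ε') * ((h+δ)*m + 1) ≤ ((h-δ) - γ) * m + (1-ε') := by nlinarith
  nlinarith
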